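/- In the isotropic case f(a) ≡ f > 0 with m = 2, let β ∈ (0, π/2) be the angle between z_1 and z_2. Then the quantities of the maximal-δ formula satisfy δ_1 = C_2·cos β = (|z_2|/f)·cos β and δ_2 = C_1·cos β = (|z_1|/f)·cos β, so the maximal bucket width for which the simplex is monotone δ-causal is Δ = (min(|z_1|, |z_2|)/f)·cos β. In particular, for the 8-point stencil with |z_1| = h, |z_2| = h√2 and β = π/4, one gets Δ = h/(f√2). -/

import Mathlib

open scoped RealInnerProductSpace

/-- Maximal bucket width in the isotropic 2D case.
With isotropic speed `f > 0`, velocities `v_j = f·z_j/|z_j|`, outward normals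
`n_j = z_j/|z_j|`, costs `C_j = |z_j|/f`, and `β ∈ (0, π/2)` the angle between
`z₁` and `z₂`, the quantities of the maximal-δ formula satisfy
`δ₁ = C₂·(v₂·n̂₁)/(v₁·n̂₁) = (|z₂|/f)·cos β`, `δ₂ = (|z₁|/f)·cos β`, hence
`Δ = min(δ₁, δ₂) = (min(|z₁|,|z₂|)/f)·cos β`; in particular, for the 8-point
stencil with `|z₁| = h`, `|z₂| = h√2`, `β = π/4`, one gets `Δ = h/(f√2)`. -/
theorem stmt14 (z₁ z₂ : EuclideanSpace ℝ (Fin 2))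
    (hz₁ : z₁ ≠ 0) (hz₂ : z₂ ≠ 0)
    (f : ℝ) (hf : 0 < f)
    (β : ℝ) (hβ : β = InnerProductGeometry.angle z₁ z₂)
    (hβ0 : 0 < β) (hβπ : β < Real.pi / 2) :
    (‖z₂‖ / f) * (⟪(f / ‖z₂‖) • z₂, ‖z₁‖⁻¹ • z₁⟫ / ⟪(f / ‖z₁‖) • z₁, ‖z₁‖⁻¹ • z₁⟫)
        = (‖z₂‖ / f) * Real.cos β ∧
    (‖z₁‖ / f) * (⟪(f / ‖z₁‖) • z₁, ‖z₂‖⁻¹ • z₂⟫ / ⟪(f / ‖z₂‖) • z₂, ‖z₂‖⁻¹ • z₂⟫)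
        = (‖z₁‖ / f) * Real.cos β ∧
    min ((‖z₂‖ / f) * Real.cos β) ((‖z₁‖ / f) * Real.cos β)
        = (min ‖z₁‖ ‖z₂‖ / f) * Real.cos β ∧
    (∀ h : ℝ, 0 < h → ‖z₁‖ = h → ‖z₂‖ = h * Real.sqrt 2 → β = Real.pi / 4 →
      min ((‖z₂‖ / f) * Real.cos β) ((‖z₁‖ / f) * Real.cos β)
        = h / (f * Real.sqrt 2)) := by
  have h1 : (0:ℝ) < ‖z₁‖ := norm_pos_iff.mpr hz₁
  have h2 : (0:ℝ) < ‖z₂‖ := norm_pos_iff.mpr hz₂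
  have hcos : Real.cos β = ⟪z₁, z₂⟫ / (‖z₁‖ * ‖z₂‖) := by
    rw [hβ, InnerProductGeometry.cos_angle]
  have hsym : ⟪z₂, z₁⟫ = ⟪z₁, z₂⟫ := real_inner_comm _ _
  have hself : ⟪z₁, z₁⟫ = ‖z₁‖ ^ 2 := real_inner_self_eq_norm_sq z₁
  have hself2 : ⟪z₂, z₂⟫ = ‖z₂‖ ^ 2 := real_inner_self_eq_norm_sq z₂
  have hcosnn : 0 ≤ Real.cos β := by
    apply Real.cos_nonneg_of_mem_Icc
    constructor
    · linarith [hβ0]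
    · linarith [hβπ]
  refine ⟨?_, ?_, ?_, ?_⟩
  · simp only [real_inner_smul_left, real_inner_smul_right, hsym, hself, hcos]
    field_simp
  · simp only [real_inner_smul_left, real_inner_smul_right, hself2, hcos]
    field_simp
  · rcases le_total ‖z₁‖ ‖z₂‖ with h | h
    · rw [min_eq_left h, min_eq_right]
      gcongr
    · rw [min_eq_right h, min_eq_left]
      gcongr
  · intro h hh e1 e2 eβ
    rw [e1, e2, eβ, Real.cos_pi_div_four]
    have hs : Real.sqrt 2 > 1 := by
      nlinarith [Real.sq_sqrt (by norm_num : (2:ℝ) ≥ 0), Real.sqrt_nonneg 2]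
    rw [min_eq_right]
    · have : Real.sqrt 2 ^ 2 = 2 := Real.sq_sqrt (by norm_num)
      field_simp
      linear_combination this
    · have hle : h ≤ h * Real.sqrt 2 := by nlinarith
      gcongr
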